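/- For every ε > 0, P(n) ≪_ε n^{1/3 + ε}, where P(n) = max_{1 ≤ a ≤ n} P(a,n) is the maximal number of iterations of x ↦ n mod x needed to reach 0 from any starting value a ≤ n. -/

import Mathlib

/-- The iteration `a_0 = a`, `a_{j+1} = n mod a_j`. -/
def pseq (n a : ℕ) : ℕ → ℕ
  | 0 => a
  | j + 1 => n % pseq n a j


/-- `P(a,n)`: the least `k ≥ 1` with `a_k = 0`. -/
noncomputable def Psteps (n a : ℕ) : ℕ := sInf {k | 0 < k ∧ pseq n a k = 0}


/-- `P(n) = max_{1 ≤ a ≤ n} P(a,n)`. -/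
noncomputable def Pmax (n : ℕ) : ℕ := (Finset.Icc 1 n).sup (fun a => Psteps n a)

namespace StmtAux

lemma pseq_shift (n a : ℕ) : ∀ j, pseq n a (j+1) = pseq n (n % a) j
  | 0 => rfl
  | j + 1 => by rw [pseq, pseq_shift n a j]; rfl

lemma exists_hit (n : ℕ) : ∀ a : ℕ, 1 ≤ a → ∃ k, 0 < k ∧ pseq n a k = 0 := by
  intro a
  induction a using Nat.strong_induction_on with
  | _ a ih =>
    intro ha
    rcases Nat.eq_zero_or_pos (n % a) with h | h
    · exact ⟨1, one_pos, by simpa [pseq] using h⟩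
    · obtain ⟨k, hk, hk0⟩ := ih (n % a) (Nat.mod_lt _ ha) h
      exact ⟨k + 1, Nat.succ_pos _, by rw [pseq_shift]; exact hk0⟩

section seq
variable {n a : ℕ}

lemma Psteps_mem (ha : 1 ≤ a) : 0 < Psteps n a ∧ pseq n a (Psteps n a) = 0 :=
  Nat.sInf_mem (exists_hit n a ha)

lemma pos_of_lt (ha : 1 ≤ a) {j : ℕ} (hj : j < Psteps n a) : 0 < pseq n a j := by
  rcases Nat.eq_zero_or_pos j with rfl | hj0
  · simpa [pseq] using Nat.pos_of_ne_zero (by omega : a ≠ 0)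
  · rcases Nat.eq_zero_or_pos (pseq n a j) with h | h
    · have : Psteps n a ≤ j :=
        Nat.sInf_le (show j ∈ {k | 0 < k ∧ pseq n a k = 0} from ⟨hj0, h⟩)
      omega
    · exact h

lemma decr (ha : 1 ≤ a) {j : ℕ} (hj : j < Psteps n a) :
    pseq n a (j+1) < pseq n a j :=
  Nat.mod_lt _ (pos_of_lt ha hj)

lemma anti (ha : 1 ≤ a) {i j : ℕ} (hij : i ≤ j) (hj : j ≤ Psteps n a) :
    pseq n a j ≤ pseq n a i := by
  induction j with
  | zero => have h := Nat.le_zero.1 hij; subst h; exact le_rfl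
  | succ j ihj =>
    rcases Nat.eq_or_lt_of_le hij with rfl | hlt
    · rfl
    · exact le_trans (le_of_lt (decr ha (by omega))) (ihj (by omega) (by omega))

lemma anti_strict (ha : 1 ≤ a) {i j : ℕ} (hij : i < j) (hj : j ≤ Psteps n a) :
    pseq n a j < pseq n a i :=
  lt_of_le_of_lt (anti ha hij hj) (decr ha (by omega))

lemma le_n (ha : 1 ≤ a) (han : a ≤ n) {j : ℕ} (hj : j ≤ Psteps n a) :
    pseq n a j ≤ n := by
  have := anti ha (Nat.zero_le j) hj
  simpa [pseq] using le_trans this han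

/-- the key: `q = n / aⱼ` strictly increases. -/
lemma q_strict (ha : 1 ≤ a) {j : ℕ} (hj : j + 1 < Psteps n a) :
    n / pseq n a j < n / pseq n a (j+1) := by
  set A := pseq n a j with hA
  set B := pseq n a (j+1) with hB
  have hApos : 0 < A := pos_of_lt ha (by omega)
  have hBpos : 0 < B := pos_of_lt ha hj
  have hBA : B < A := decr ha (by omega)
  have hmod : B = n % A := rfl
  have hsum : n / A * A + B = n := by
    rw [hmod, Nat.mul_comm]; exact Nat.div_add_mod n A
  have h1 : (n / A + 1) * B ≤ n := by
    have h2 := Nat.mul_le_mul_left (n / A) (le_of_lt hBA)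
    calc (n / A + 1) * B = n / A * B + B := by ring
      _ ≤ n / A * A + B := by omega
      _ = n := hsum
  have := (Nat.le_div_iff_mul_le hBpos).2 h1
  omega

lemma j_le_q (ha : 1 ≤ a) : ∀ j, j < Psteps n a → j ≤ n / pseq n a j := by
  intro j
  induction j with
  | zero => intro _; exact Nat.zero_le _
  | succ j ihj =>
    intro hj
    have h1 := ihj (by omega)
    have h2 := q_strict ha hj
    omega


lemma countBig (ha : 1 ≤ a) {B : ℕ} (hB : 1 ≤ B) :
    ((Finset.range (Psteps n a)).filter (fun j => B ≤ pseq n a j)).card ≤ n / B + 1 := by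
  have hsub : ((Finset.range (Psteps n a)).filter (fun j => B ≤ pseq n a j)) ⊆
      Finset.range (n / B + 1) := by
    intro j hj
    simp only [Finset.mem_filter, Finset.mem_range] at hj ⊢
    have h1 := j_le_q ha j hj.1
    have h2 : n / pseq n a j ≤ n / B := Nat.div_le_div_left hj.2 hB
    omega
  simpa using Finset.card_le_card hsub

lemma classCard (ha : 1 ≤ a) (k D : ℕ) (hD : 2 ≤ D) :
    ((Finset.range (Psteps n a)).filter
      (fun j => 2^k ≤ pseq n a j ∧ pseq n a j < 2^(k+1))).card ≤
    (2^k / D + 1) + (∑ g ∈ Finset.Ico 1 D, (n+g).divisors.card) + 1 := by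
  classical
  set P := Psteps n a with hP
  set A := pseq n a with hAdef
  set J := (Finset.range P).filter (fun j => 2^k ≤ A j ∧ A j < 2^(k+1)) with hJ
  set T3 := J.filter (fun j => A (j+1) < 2^k) with hT3
  set T12 := J.filter (fun j => ¬ A (j+1) < 2^k) with hT12
  have hsplit : T3.card + T12.card = J.card := Finset.card_filter_add_card_filter_not _
  -- T3 has at most one element
  have hT3card : T3.card ≤ 1 := by
    refine Finset.card_le_one.2 ?_
    intro j hj j' hj'
    simp only [hT3, hJ, Finset.mem_filter, Finset.mem_range] at hj hj'
    by_contra hne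
    rcases lt_or_gt_of_ne hne with h | h
    · have : A j' ≤ A (j+1) := anti ha (by omega) (by omega)
      omega
    · have : A j ≤ A (j'+1) := anti ha (by omega) (by omega)
      omega
  set T1 := T12.filter (fun j => A (j+1) + D ≤ A j) with hT1
  set T2 := T12.filter (fun j => ¬ (A (j+1) + D ≤ A j)) with hT2
  have hsplit2 : T1.card + T2.card = T12.card := Finset.card_filter_add_card_filter_not _
  -- big gaps
  have hT1card : T1.card ≤ 2^k / D + 1 := by
    have hmono : ∀ j ∈ T1, ∀ j' ∈ T1, j < j' →
        (2^(k+1) - A j) / D < (2^(k+1) - A j') / D := by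
      intro j hj j' hj' hlt
      simp only [hT1, hT12, hJ, Finset.mem_filter, Finset.mem_range] at hj hj'
      have h1 : A j' ≤ A (j+1) := anti ha (by omega) (by omega)
      have hle : (2^(k+1) - A j) + D ≤ 2^(k+1) - A j' := by omega
      have h2 : ((2^(k+1) - A j) + D) / D = (2^(k+1) - A j) / D + 1 :=
        Nat.add_div_right _ (by omega)
      have h3 := Nat.div_le_div_right (c := D) hle
      omega
    refine le_trans (Finset.card_le_card_of_injOn (t := Finset.range (2^k / D + 1))
      (fun j => (2^(k+1) - A j) / D) ?_ ?_) (by simp)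
    · intro j hj
      simp only [Finset.mem_coe, hT1, hT12, hJ, Finset.mem_filter, Finset.mem_range] at hj
      simp only [Finset.mem_coe, Finset.mem_range]
      have : 2^(k+1) - A j ≤ 2^k := by
        have : (2:ℕ)^(k+1) = 2^k + 2^k := by ring
        omega
      have := Nat.div_le_div_right (c := D) this
      omega
    · intro j hj j' hj' hfe
      simp only [Finset.mem_coe] at hj hj'
      by_contra hne
      rcases lt_or_gt_of_ne hne with h | h
      · exact absurd hfe (Nat.ne_of_lt (hmono j hj j' hj' h))
      · exact absurd hfe.symm (Nat.ne_of_lt (hmono j' hj' j hj h))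
  -- small gaps: divisors
  have hT2card : T2.card ≤ ∑ g ∈ Finset.Ico 1 D, (n+g).divisors.card := by
    have hmaps : ∀ j ∈ T2, A j ∈ (Finset.Ico 1 D).biUnion (fun g => (n+g).divisors) := by
      intro j hj
      simp only [hT2, hT12, hT1, hJ, Finset.mem_filter, Finset.mem_range] at hj
      obtain ⟨⟨⟨hjP, hlow, hhigh⟩, hge⟩, hgap⟩ := hj
      have hdec : A (j+1) < A j := decr ha hjP
      set g := A j - A (j+1) with hg
      have hg1 : 1 ≤ g := by omega
      have hgD : g < D := by omega
      have hdm : A j * (n / A j) + A (j+1) = n := by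
        have : A (j+1) = n % A j := rfl
        rw [this]; exact Nat.div_add_mod n (A j)
      have hdvd : A j ∣ (n + g) := by
        refine ⟨n / A j + 1, ?_⟩
        have : A j * (n / A j + 1) = A j * (n / A j) + A j := by ring
        omega
      rw [Finset.mem_biUnion]
      exact ⟨g, Finset.mem_Ico.2 ⟨hg1, hgD⟩, Nat.mem_divisors.2 ⟨hdvd, by omega⟩⟩
    have hinj : Set.InjOn A T2 := by
      intro j hj j' hj' hfe
      simp only [Finset.mem_coe, hT2, hT12, hT1, hJ, Finset.mem_filter,
        Finset.mem_range] at hj hj'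
      by_contra hne
      rcases lt_or_gt_of_ne hne with h | h
      · exact absurd hfe (Nat.ne_of_gt (anti_strict ha h (by omega)))
      · exact absurd hfe (Nat.ne_of_lt (anti_strict ha h (by omega)))
    exact le_trans (Finset.card_le_card_of_injOn A hmaps hinj) Finset.card_biUnion_le
  omega

lemma smallCount (ha : 1 ≤ a) (K : ℕ) :
    ((Finset.range (Psteps n a)).filter (fun j => pseq n a j < 2^(K+1))).card ≤
    ∑ k ∈ Finset.range (K+1),
      ((Finset.range (Psteps n a)).filter
        (fun j => 2^k ≤ pseq n a j ∧ pseq n a j < 2^(k+1))).card := by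
  classical
  have hsub : ((Finset.range (Psteps n a)).filter (fun j => pseq n a j < 2^(K+1))) ⊆
      (Finset.range (K+1)).biUnion (fun k => (Finset.range (Psteps n a)).filter
        (fun j => 2^k ≤ pseq n a j ∧ pseq n a j < 2^(k+1))) := by
    intro j hj
    simp only [Finset.mem_filter, Finset.mem_range] at hj
    obtain ⟨hjP, hjB⟩ := hj
    have hpos : 0 < pseq n a j := pos_of_lt ha hjP
    rw [Finset.mem_biUnion]
    refine ⟨Nat.log 2 (pseq n a j), ?_, ?_⟩
    · simp only [Finset.mem_range]
      have h1 : 2 ^ Nat.log 2 (pseq n a j) ≤ pseq n a j :=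
        Nat.pow_log_le_self 2 (by omega)
      have : (2:ℕ) ^ Nat.log 2 (pseq n a j) < 2 ^ (K+1) := by omega
      exact (Nat.pow_lt_pow_iff_right (by norm_num)).1 this
    · simp only [Finset.mem_filter, Finset.mem_range]
      exact ⟨hjP, Nat.pow_log_le_self 2 (by omega),
        Nat.lt_pow_succ_log_self (by norm_num) _⟩
  exact le_trans (Finset.card_le_card hsub) Finset.card_biUnion_le


end seq

/-- dyadic cutoff exponent -/
def Kn (n : ℕ) : ℕ := 2 * Nat.log 2 n / 3 + 1

/-- max divisor count in the relevant window -/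
def DM (n : ℕ) : ℕ := (Finset.Icc 1 (5*n)).sup (fun m => m.divisors.card)

/-- the explicit natural-number bound -/
def NB (n : ℕ) : ℕ :=
  (n / 2^(Kn n + 1) + 1) + (Kn n + 1) * (2^(Kn n / 2 + 1) * (1 + DM n) + 2)

lemma pow_div_le (k K : ℕ) (hk : k ≤ K) : 2^k / 2^(k/2+1) ≤ 2^(K/2) := by
  have h1 : k ≤ K/2 + (k/2+1) := by omega
  have h2 : (2:ℕ)^k ≤ 2^(K/2) * 2^(k/2+1) := by
    rw [← pow_add]; exact Nat.pow_le_pow_right (by norm_num) h1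
  calc 2^k / 2^(k/2+1) ≤ (2^(K/2) * 2^(k/2+1)) / 2^(k/2+1) := Nat.div_le_div_right h2
    _ = 2^(K/2) := Nat.mul_div_cancel _ (by positivity)

lemma two_pow_Kn_le {n : ℕ} (hn : 1 ≤ n) : 2^(Kn n) ≤ 2 * n := by
  have h1 : 2 * Nat.log 2 n / 3 ≤ Nat.log 2 n := by omega
  calc (2:ℕ)^(Kn n) = 2 * 2^(2 * Nat.log 2 n / 3) := by rw [Kn, pow_succ, Nat.mul_comm]
    _ ≤ 2 * 2^(Nat.log 2 n) := by
        have := Nat.pow_le_pow_right (n := 2) (by norm_num) h1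
        omega
    _ ≤ 2 * n := by
        have := Nat.pow_log_le_self 2 (show n ≠ 0 by omega)
        omega

lemma mainNat {n a : ℕ} (ha : 1 ≤ a) (han : a ≤ n) : Psteps n a ≤ NB n := by
  classical
  set P := Psteps n a with hP
  set K := Kn n with hK
  have hn : 1 ≤ n := le_trans ha han
  have hsplit : P = ((Finset.range P).filter (fun j => 2^(K+1) ≤ pseq n a j)).card
      + ((Finset.range P).filter (fun j => ¬ 2^(K+1) ≤ pseq n a j)).card := by
    rw [Finset.card_filter_add_card_filter_not, Finset.card_range]
  have hbig : ((Finset.range P).filter (fun j => 2^(K+1) ≤ pseq n a j)).card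
      ≤ n / 2^(K+1) + 1 := countBig ha (Nat.one_le_two_pow)
  have hsmall' : ((Finset.range P).filter (fun j => ¬ 2^(K+1) ≤ pseq n a j)).card
      ≤ ∑ k ∈ Finset.range (K+1),
        ((Finset.range P).filter
          (fun j => 2^k ≤ pseq n a j ∧ pseq n a j < 2^(k+1))).card := by
    have : ((Finset.range P).filter (fun j => ¬ 2^(K+1) ≤ pseq n a j))
        = ((Finset.range P).filter (fun j => pseq n a j < 2^(K+1))) := by
      apply Finset.filter_congr; intro j _; simp [not_le]
    rw [this]; exact smallCount ha K
  have hperk : ∀ k ∈ Finset.range (K+1),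
      ((Finset.range P).filter
        (fun j => 2^k ≤ pseq n a j ∧ pseq n a j < 2^(k+1))).card
      ≤ 2^(K/2+1) * (1 + DM n) + 2 := by
    intro k hk
    rw [Finset.mem_range] at hk
    have hD : 2 ≤ 2^(k/2+1) := by
      calc (2:ℕ) = 2^1 := by norm_num
        _ ≤ 2^(k/2+1) := Nat.pow_le_pow_right (by norm_num) (by omega)
    have h1 := classCard (n := n) ha k (2^(k/2+1)) hD
    have h2 : 2^k / 2^(k/2+1) ≤ 2^(K/2) := pow_div_le k K (by omega)
    have h3 : ∑ g ∈ Finset.Ico 1 (2^(k/2+1)), (n+g).divisors.card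
        ≤ 2^(k/2+1) * DM n := by
      have hbound : ∀ g ∈ Finset.Ico 1 (2^(k/2+1)), (n+g).divisors.card ≤ DM n := by
        intro g hg
        rw [Finset.mem_Ico] at hg
        have hgle : g ≤ 4 * n := by
          have hle1 : (2:ℕ)^(k/2+1) ≤ 2^(K+1) := Nat.pow_le_pow_right (by norm_num) (by omega)
          have hle2 : (2:ℕ)^(K+1) ≤ 4 * n := by
            have hKn : (2:ℕ)^K ≤ 2 * n := two_pow_Kn_le hn
            rw [pow_succ]
            omega
          omega
        refine Finset.le_sup (f := fun m : ℕ => m.divisors.card) ?_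
        rw [Finset.mem_Icc]
        omega
      calc ∑ g ∈ Finset.Ico 1 (2^(k/2+1)), (n+g).divisors.card
          ≤ ∑ _g ∈ Finset.Ico 1 (2^(k/2+1)), DM n := Finset.sum_le_sum hbound
        _ = (2^(k/2+1) - 1) * DM n := by rw [Finset.sum_const, Nat.card_Ico, smul_eq_mul]
        _ ≤ 2^(k/2+1) * DM n := Nat.mul_le_mul_right _ (by omega)
    have h4 : (2:ℕ)^(k/2+1) ≤ 2^(K/2+1) := Nat.pow_le_pow_right (by norm_num) (by omega)
    have h5 : (2:ℕ)^(K/2) ≤ 2^(K/2+1) := Nat.pow_le_pow_right (by norm_num) (by omega)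
    have h6 : 2^(k/2+1) * DM n ≤ 2^(K/2+1) * DM n := Nat.mul_le_mul_right _ h4
    calc ((Finset.range P).filter
        (fun j => 2^k ≤ pseq n a j ∧ pseq n a j < 2^(k+1))).card
        ≤ (2^k / 2^(k/2+1) + 1) + (∑ g ∈ Finset.Ico 1 (2^(k/2+1)), (n+g).divisors.card) + 1 := h1
      _ ≤ (2^(K/2) + 1) + 2^(K/2+1) * DM n + 1 := by omega
      _ ≤ 2^(K/2+1) * (1 + DM n) + 2 := by
          have : 2^(K/2+1) * (1 + DM n) = 2^(K/2+1) + 2^(K/2+1) * DM n := by ring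
          omega
  have hsum : ∑ k ∈ Finset.range (K+1),
      ((Finset.range P).filter
        (fun j => 2^k ≤ pseq n a j ∧ pseq n a j < 2^(k+1))).card
      ≤ (K+1) * (2^(K/2+1) * (1 + DM n) + 2) := by
    calc ∑ k ∈ Finset.range (K+1), ((Finset.range P).filter
          (fun j => 2^k ≤ pseq n a j ∧ pseq n a j < 2^(k+1))).card
        ≤ ∑ _k ∈ Finset.range (K+1), (2^(K/2+1) * (1 + DM n) + 2) :=
          Finset.sum_le_sum hperk
      _ = (K+1) * (2^(K/2+1) * (1 + DM n) + 2) := by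
          rw [Finset.sum_const, Finset.card_range]; ring
  rw [StmtAux.NB, ← hK]
  omega


lemma div_count_pow_le (k m : ℕ) (hm : 1 ≤ m) :
    m.divisors.card ^ k ≤ (Nat.log 2 m + 1) ^ (k * 2^k) * m := by
  classical
  have hm0 : m ≠ 0 := by omega
  set L := Nat.log 2 m with hL
  have hfe : ∀ p ∈ m.primeFactors, m.factorization p ≤ L := by
    intro p hp
    have hp2 : 2 ≤ p := (Nat.prime_of_mem_primeFactors hp).two_le
    have h1 : p ^ m.factorization p ≤ m := Nat.ordProj_le p hm0
    have h2 : 2 ^ m.factorization p ≤ m :=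
      le_trans (Nat.pow_le_pow_left hp2 _) h1
    exact (Nat.le_log_iff_pow_le (by norm_num) hm0).2 h2
  rw [Nat.card_divisors hm0, ← Finset.prod_pow]
  rw [← Finset.prod_filter_mul_prod_filter_not m.primeFactors (fun p => p < 2^k)]
  have hS1 : (m.primeFactors.filter (fun p => p < 2^k)).card ≤ 2^k := by
    refine le_trans (Finset.card_le_card ?_) (Finset.card_range _).le
    · intro p hp
      simp only [Finset.mem_filter] at hp
      exact Finset.mem_range.2 hp.2
  have h1 : ∏ p ∈ m.primeFactors.filter (fun p => p < 2^k),
      (m.factorization p + 1) ^ k ≤ (L + 1) ^ (k * 2^k) := by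
    calc ∏ p ∈ m.primeFactors.filter (fun p => p < 2^k), (m.factorization p + 1) ^ k
        ≤ ∏ _p ∈ m.primeFactors.filter (fun p => p < 2^k), (L + 1) ^ k := by
          refine Finset.prod_le_prod' ?_
          intro p hp
          exact Nat.pow_le_pow_left (by
            have := hfe p (Finset.mem_of_mem_filter p hp); omega) k
      _ = ((L+1)^k) ^ (m.primeFactors.filter (fun p => p < 2^k)).card := by
          rw [Finset.prod_const]
      _ ≤ ((L+1)^k) ^ (2^k) := Nat.pow_le_pow_right (by positivity) hS1
      _ = (L + 1) ^ (k * 2^k) := by rw [← pow_mul]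
  have h2 : ∏ p ∈ m.primeFactors.filter (fun p => ¬ p < 2^k),
      (m.factorization p + 1) ^ k ≤ m := by
    calc ∏ p ∈ m.primeFactors.filter (fun p => ¬ p < 2^k), (m.factorization p + 1) ^ k
        ≤ ∏ p ∈ m.primeFactors.filter (fun p => ¬ p < 2^k), p ^ m.factorization p := by
          refine Finset.prod_le_prod' ?_
          · intro p hp
            simp only [Finset.mem_filter, not_lt] at hp
            calc (m.factorization p + 1) ^ k ≤ (2 ^ m.factorization p) ^ k :=
                  Nat.pow_le_pow_left Nat.lt_two_pow_self k
              _ = (2 ^ k) ^ m.factorization p := by rw [← pow_mul, ← pow_mul, Nat.mul_comm]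
              _ ≤ p ^ m.factorization p := Nat.pow_le_pow_left hp.2 _
      _ ≤ ∏ p ∈ m.primeFactors, p ^ m.factorization p := by
          refine Finset.prod_le_prod_of_subset_of_one_le' (Finset.filter_subset _ _) ?_
          intro p hp _
          exact Nat.one_le_pow _ _ (Nat.pos_of_mem_primeFactors hp)
      _ = m := by
          rw [← Nat.prod_factorization_eq_prod_primeFactors]
          exact Nat.factorization_prod_pow_eq_self hm0
  exact Nat.mul_le_mul h1 h2

lemma log_nat_bound {δ : ℝ} (hδ : 0 < δ) :
    ∀ m : ℕ, 1 ≤ m → ((Nat.log 2 m : ℝ) + 1) ≤ (1/(δ * Real.log 2) + 1) * (m:ℝ)^δ := by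
  intro m hm
  have hm1 : (1:ℝ) ≤ (m:ℝ) := by exact_mod_cast hm
  have hmpos : (0:ℝ) < m := by linarith
  have hrp1 : (1:ℝ) ≤ (m:ℝ)^δ := by
    calc (1:ℝ) = (1:ℝ)^δ := (Real.one_rpow δ).symm
      _ ≤ (m:ℝ)^δ := Real.rpow_le_rpow (by norm_num) hm1 hδ.le
  have hlog2 : (0:ℝ) < Real.log 2 := Real.log_pos (by norm_num)
  have hL : (Nat.log 2 m : ℝ) * Real.log 2 ≤ Real.log m := by
    have h1 : (2:ℕ) ^ Nat.log 2 m ≤ m := Nat.pow_log_le_self 2 (by omega)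
    have h2 : ((2:ℝ)) ^ (Nat.log 2 m) ≤ (m:ℝ) := by exact_mod_cast h1
    have h3 := Real.log_le_log (by positivity) h2
    rw [Real.log_pow] at h3; exact h3
  have hlm : Real.log m ≤ (m:ℝ)^δ / δ := Real.log_le_rpow_div hmpos.le hδ
  have hLb : (Nat.log 2 m : ℝ) ≤ (m:ℝ)^δ / (δ * Real.log 2) := by
    rw [le_div_iff₀ (by positivity)]
    calc (Nat.log 2 m : ℝ) * (δ * Real.log 2) = ((Nat.log 2 m : ℝ) * Real.log 2) * δ := by ring
      _ ≤ Real.log m * δ := by nlinarith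
      _ ≤ (m:ℝ)^δ := by
          rw [mul_comm]
          calc δ * Real.log m ≤ δ * ((m:ℝ)^δ / δ) := by nlinarith
            _ = (m:ℝ)^δ := by field_simp
  calc ((Nat.log 2 m : ℝ) + 1) ≤ (m:ℝ)^δ / (δ * Real.log 2) + (m:ℝ)^δ := by linarith
    _ = (1/(δ * Real.log 2) + 1) * (m:ℝ)^δ := by ring

lemma divisor_bound {ε : ℝ} (hε : 0 < ε) :
    ∃ C : ℝ, 0 < C ∧ ∀ m : ℕ, 1 ≤ m → (m.divisors.card : ℝ) ≤ C * (m:ℝ) ^ ε := by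
  set k := ⌈2/ε⌉₊ with hkdef
  have hk1 : 1 ≤ k := Nat.one_le_iff_ne_zero.2 (by
    simp only [hkdef, ne_eq, Nat.ceil_eq_zero, not_le]
    positivity)
  have hk2 : 1/(k:ℝ) ≤ ε/2 := by
    have h1 : 2/ε ≤ (k:ℝ) := Nat.le_ceil _
    have hkpos : (0:ℝ) < k := by exact_mod_cast hk1
    rw [div_le_iff₀ hkpos]
    rw [div_le_iff₀ hε] at h1
    nlinarith
  set δ := ε / (2 * 2^k) with hδdef
  have hδ : 0 < δ := by positivity
  set C1 := 1/(δ * Real.log 2) + 1 with hC1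
  have hC1pos : 0 < C1 := by
    have : (0:ℝ) < Real.log 2 := Real.log_pos (by norm_num)
    positivity
  refine ⟨C1 ^ (2^k), by positivity, ?_⟩
  intro m hm
  have hm1 : (1:ℝ) ≤ (m:ℝ) := by exact_mod_cast hm
  set L := Nat.log 2 m with hLdef
  set d := m.divisors.card with hd
  -- real k-th root of the nat inequality
  have key : (d:ℝ) ≤ ((L:ℝ)+1)^(2^k) * (m:ℝ)^((1:ℝ)/k) := by
    have hknz : (k:ℝ) ≠ 0 := by positivity
    refine le_of_pow_le_pow_left₀ (Nat.one_le_iff_ne_zero.1 hk1) (by positivity) ?_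
    have hnat : (d:ℝ)^k ≤ ((L:ℝ)+1)^(k * 2^k) * (m:ℝ) := by
      have := div_count_pow_le k m hm
      have hcast : ((d^k : ℕ):ℝ) ≤ (((L+1)^(k*2^k) * m : ℕ):ℝ) := by exact_mod_cast this
      push_cast at hcast
      convert hcast using 2 <;> push_cast <;> ring
    calc (d:ℝ)^k ≤ ((L:ℝ)+1)^(k * 2^k) * (m:ℝ) := hnat
      _ = (((L:ℝ)+1)^(2^k) * (m:ℝ)^((1:ℝ)/k))^k := by
          rw [mul_pow, ← pow_mul, ← Real.rpow_natCast ((m:ℝ)^((1:ℝ)/k)) k,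
            ← Real.rpow_mul (by linarith), one_div, inv_mul_cancel₀ hknz, Real.rpow_one,
            Nat.mul_comm]
  have hLb : ((L:ℝ)+1) ≤ C1 * (m:ℝ)^δ := log_nat_bound hδ m hm
  have hLpow : ((L:ℝ)+1)^(2^k) ≤ (C1 * (m:ℝ)^δ)^(2^k) :=
    pow_le_pow_left₀ (by positivity) hLb _
  have hrw : (C1 * (m:ℝ)^δ)^(2^k) * (m:ℝ)^((1:ℝ)/k)
      = C1^(2^k) * (m:ℝ)^(δ * 2^k + 1/k) := by
    rw [mul_pow, ← Real.rpow_natCast ((m:ℝ)^δ) (2^k), ← Real.rpow_mul (by linarith),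
      mul_assoc, ← Real.rpow_add (by linarith)]
    norm_num
  have hexp : δ * 2^k + 1/k ≤ ε := by
    have h1 : δ * 2^k = ε/2 := by
      rw [hδdef]; field_simp
    rw [h1]; linarith
  calc (d:ℝ) ≤ ((L:ℝ)+1)^(2^k) * (m:ℝ)^((1:ℝ)/k) := key
    _ ≤ (C1 * (m:ℝ)^δ)^(2^k) * (m:ℝ)^((1:ℝ)/k) := by
        have : (0:ℝ) ≤ (m:ℝ)^((1:ℝ)/k) := by positivity
        nlinarith
    _ = C1^(2^k) * (m:ℝ)^(δ * 2^k + 1/k) := hrw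
    _ ≤ C1^(2^k) * (m:ℝ)^ε := by
        have := Real.rpow_le_rpow_of_exponent_le hm1 hexp
        nlinarith [pow_pos hC1pos (2^k)]

set_option maxHeartbeats 2000000 in
lemma NB_le {ε : ℝ} (hε : 0 < ε) :
    ∃ C : ℝ, 0 < C ∧ ∀ n : ℕ, 1 ≤ n → (NB n : ℝ) ≤ C * (n:ℝ)^((1:ℝ)/3 + ε) := by
  obtain ⟨Cd, hCd, hCdb⟩ := divisor_bound (half_pos hε)
  have hlog2 : (0:ℝ) < Real.log 2 := Real.log_pos (by norm_num)
  set C2 : ℝ := 3 * (1/((ε/2) * Real.log 2) + 1) with hC2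
  have hC2pos : 0 < C2 := by positivity
  set C3 : ℝ := Cd * (5:ℝ)^(ε/2) + 1 with hC3
  have hC3pos : 0 < C3 := by positivity
  refine ⟨2 + 4*C2*C3 + 2*C2, by positivity, ?_⟩
  intro n hn
  set L := Nat.log 2 n with hL
  set K := Kn n with hK
  have hn1 : (1:ℝ) ≤ (n:ℝ) := by exact_mod_cast hn
  have hnpos : (0:ℝ) < (n:ℝ) := by linarith
  -- basic rpow facts
  have hone_le : ∀ t : ℝ, 0 ≤ t → (1:ℝ) ≤ (n:ℝ)^t := by
    intro t ht
    calc (1:ℝ) = 1^t := (Real.one_rpow t).symm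
      _ ≤ (n:ℝ)^t := Real.rpow_le_rpow (by norm_num) hn1 ht
  have h2L : ((2:ℝ))^(L:ℕ) ≤ (n:ℝ) := by
    exact_mod_cast Nat.pow_log_le_self 2 (show n ≠ 0 by omega)
  have hnlt : (n:ℝ) < (2:ℝ)^(L+1 : ℕ) := by
    exact_mod_cast Nat.lt_pow_succ_log_self (by norm_num) n
  -- (a) first summand
  have ha : ((n / 2^(K + 1) : ℕ) : ℝ) ≤ (n:ℝ)^((1:ℝ)/3) := by
    have h1 : ((n / 2^(K + 1) : ℕ) : ℝ) ≤ (n:ℝ) / (2^(K+1) : ℕ) := Nat.cast_div_le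
    have h2 : (n:ℝ)^((2:ℝ)/3) ≤ ((2:ℕ)^(K+1) : ℝ) := by
      have hKL : (2*L+2 : ℝ)/3 ≤ ((K+1 : ℕ) : ℝ) := by
        have : 2*L ≤ 3 * (2*L/3) + 2 := by omega
        have hKval : (K : ℝ) = (2*L/3 : ℕ) + 1 := by rw [hK, Kn]; push_cast; ring
        have h3 : (2*(L:ℝ) + 2)/3 ≤ ((2*L/3 : ℕ) : ℝ) + 2 := by
          have h4 : (2*(L:ℝ)) ≤ 3 * ((2*L/3 : ℕ):ℝ) + 2 := by exact_mod_cast this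
          linarith
        push_cast
        linarith [hKval]
      calc (n:ℝ)^((2:ℝ)/3) ≤ ((2:ℝ)^(L+1:ℕ))^((2:ℝ)/3) :=
            Real.rpow_le_rpow hnpos.le hnlt.le (by norm_num)
        _ = (2:ℝ)^(((L+1:ℕ):ℝ) * (2/3)) := by
            rw [← Real.rpow_natCast 2 (L+1), ← Real.rpow_mul (by norm_num)]
        _ ≤ (2:ℝ)^(((K+1:ℕ):ℝ)) := by
            apply Real.rpow_le_rpow_of_exponent_le (by norm_num)
            push_cast at hKL ⊢
            linarith
        _ = ((2:ℕ)^(K+1) : ℝ) := by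
            rw [Real.rpow_natCast]; push_cast; ring
    have h3 : (n:ℝ) / ((2:ℕ)^(K+1) : ℝ) ≤ (n:ℝ)^((1:ℝ)/3) := by
      rw [div_le_iff₀ (by positivity)]
      calc (n:ℝ) = (n:ℝ)^((1:ℝ)/3 + 2/3) := by
            rw [show (1:ℝ)/3 + 2/3 = 1 by norm_num, Real.rpow_one]
        _ = (n:ℝ)^((1:ℝ)/3) * (n:ℝ)^((2:ℝ)/3) := Real.rpow_add hnpos _ _
        _ ≤ (n:ℝ)^((1:ℝ)/3) * ((2:ℕ)^(K+1) : ℝ) := by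
            have := hone_le (1/3) (by norm_num)
            nlinarith
    exact le_trans h1 (by exact_mod_cast h3)
  -- (b) K+1 bound
  have hb : ((K:ℝ) + 1) ≤ C2 * (n:ℝ)^(ε/2) := by
    have h1 : (K:ℝ) + 1 ≤ 3 * ((L:ℝ) + 1) := by
      have : K ≤ L + 1 := by rw [hK, Kn]; omega
      have : (K:ℝ) ≤ (L:ℝ) + 1 := by exact_mod_cast this
      linarith
    have h2 := log_nat_bound (half_pos hε) n hn
    rw [hC2]
    rw [← hL] at h2
    nlinarith
  -- (c) 2^(K/2+1) bound
  have hc : ((2:ℕ)^(K/2+1) : ℝ) ≤ 4 * (n:ℝ)^((1:ℝ)/3) := by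
    have h1 : ((K/2 + 1 : ℕ) : ℝ) ≤ (L:ℝ)/3 + 2 := by
      have hKL : K ≤ 2*L/3 + 1 := le_of_eq hK
      have h2 : (K/2 + 1 : ℕ) ≤ L/3 + 2 := by omega
      have h3 : ((L/3 : ℕ) : ℝ) ≤ (L:ℝ)/3 := by
        have := Nat.div_mul_le_self L 3
        have h4 : ((L/3 : ℕ) : ℝ) * 3 ≤ (L:ℝ) := by exact_mod_cast Nat.div_mul_le_self L 3
        linarith
      have h5 : ((K/2 + 1 : ℕ) : ℝ) ≤ ((L/3 : ℕ) : ℝ) + 2 := by exact_mod_cast h2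
      linarith
    calc ((2:ℕ)^(K/2+1) : ℝ) = (2:ℝ)^(((K/2+1 : ℕ)):ℝ) := by
          rw [Real.rpow_natCast]; push_cast; ring
      _ ≤ (2:ℝ)^((L:ℝ)/3 + 2) := Real.rpow_le_rpow_of_exponent_le (by norm_num) h1
      _ = 4 * ((2:ℝ)^((L:ℝ)))^((1:ℝ)/3) := by
          rw [Real.rpow_add (by norm_num), ← Real.rpow_mul (by norm_num)]
          norm_num
          rw [mul_comm ((2:ℝ)^((L:ℝ)/3))]
          congr 1
          congr 1
          ring
      _ ≤ 4 * (n:ℝ)^((1:ℝ)/3) := by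
          have h6 : ((2:ℝ)^((L:ℝ))) ≤ (n:ℝ) := by
            rw [Real.rpow_natCast]; exact h2L
          have := Real.rpow_le_rpow (by positivity) h6 (show (0:ℝ) ≤ 1/3 by norm_num)
          linarith
  -- (d) DM bound
  have hd : ((DM n : ℕ) : ℝ) + 1 ≤ C3 * (n:ℝ)^(ε/2) := by
    have hne : (Finset.Icc 1 (5*n)).Nonempty := by
      refine ⟨1, Finset.mem_Icc.2 ⟨le_refl _, by omega⟩⟩
    obtain ⟨m, hm, hDM⟩ := Finset.exists_mem_eq_sup _ hne (fun m : ℕ => m.divisors.card)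
    rw [Finset.mem_Icc] at hm
    have h1 : (m.divisors.card : ℝ) ≤ Cd * (m:ℝ)^(ε/2) := hCdb m hm.1
    have h2 : (m:ℝ)^(ε/2) ≤ ((5*n : ℕ):ℝ)^(ε/2) := by
      apply Real.rpow_le_rpow (by positivity) (by exact_mod_cast hm.2) (by positivity)
    have h3 : ((5*n : ℕ):ℝ)^(ε/2) = (5:ℝ)^(ε/2) * (n:ℝ)^(ε/2) := by
      push_cast
      exact Real.mul_rpow (by norm_num) (by positivity)
    have h4 : (1:ℝ) ≤ (n:ℝ)^(ε/2) := hone_le _ (by positivity)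
    have h5 : (0:ℝ) < (5:ℝ)^(ε/2) := by positivity
    rw [DM, hDM, hC3]
    calc (m.divisors.card : ℝ) + 1 ≤ Cd * ((5:ℝ)^(ε/2) * (n:ℝ)^(ε/2)) + 1 := by
          rw [← h3]; nlinarith
      _ ≤ (Cd * (5:ℝ)^(ε/2) + 1) * (n:ℝ)^(ε/2) := by nlinarith
  -- assemble
  have hNB : (NB n : ℝ) = ((n / 2^(K + 1) : ℕ) : ℝ) + 1
      + ((K:ℝ)+1) * (((2:ℕ)^(K/2+1) : ℝ) * (1 + (DM n : ℝ)) + 2) := by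
    rw [StmtAux.NB, ← hK]
    push_cast
    ring
  have e1 : (0:ℝ) ≤ (n:ℝ)^((1:ℝ)/3) := by positivity
  have e2 : (0:ℝ) ≤ (n:ℝ)^(ε/2) := by positivity
  have e4 : (1:ℝ) ≤ (n:ℝ)^((1:ℝ)/3 + ε) := hone_le _ (by positivity)
  have e5 : (n:ℝ)^(ε/2) * ((n:ℝ)^((1:ℝ)/3) * (n:ℝ)^(ε/2)) = (n:ℝ)^((1:ℝ)/3 + ε) := by
    rw [← Real.rpow_add hnpos, ← Real.rpow_add hnpos]
    congr 1; ring
  have e6 : (n:ℝ)^((1:ℝ)/3) ≤ (n:ℝ)^((1:ℝ)/3 + ε) :=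
    Real.rpow_le_rpow_of_exponent_le hn1 (by linarith)
  have e7 : (n:ℝ)^(ε/2) ≤ (n:ℝ)^((1:ℝ)/3 + ε) :=
    Real.rpow_le_rpow_of_exponent_le hn1 (by linarith)
  rw [hNB]
  have hKpos : (0:ℝ) ≤ (K:ℝ) + 1 := by positivity
  have hDM0 : (0:ℝ) ≤ (DM n : ℝ) := by positivity
  have step1 : ((K:ℝ)+1) * (((2:ℕ)^(K/2+1) : ℝ) * (1 + (DM n : ℝ)) + 2)
      ≤ (C2 * (n:ℝ)^(ε/2)) * ((4 * (n:ℝ)^((1:ℝ)/3)) * (C3 * (n:ℝ)^(ε/2)) + 2) := by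
    have t1 : ((2:ℕ)^(K/2+1) : ℝ) * (1 + (DM n : ℝ))
        ≤ (4 * (n:ℝ)^((1:ℝ)/3)) * (C3 * (n:ℝ)^(ε/2)) := by
      have := mul_le_mul hc (by linarith [hd] : (1:ℝ) + (DM n : ℝ) ≤ C3 * (n:ℝ)^(ε/2))
        (by positivity) (by positivity)
      linarith
    have t2 : (0:ℝ) ≤ C2 * (n:ℝ)^(ε/2) := by positivity
    have t3 : ((K:ℝ)+1) * (((2:ℕ)^(K/2+1) : ℝ) * (1 + (DM n : ℝ)) + 2)
        ≤ (C2 * (n:ℝ)^(ε/2)) * (((2:ℕ)^(K/2+1) : ℝ) * (1 + (DM n : ℝ)) + 2) := by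
      apply mul_le_mul_of_nonneg_right hb
      positivity
    have t4 : (C2 * (n:ℝ)^(ε/2)) * (((2:ℕ)^(K/2+1) : ℝ) * (1 + (DM n : ℝ)) + 2)
        ≤ (C2 * (n:ℝ)^(ε/2)) * ((4 * (n:ℝ)^((1:ℝ)/3)) * (C3 * (n:ℝ)^(ε/2)) + 2) := by
      apply mul_le_mul_of_nonneg_left _ t2
      linarith
    linarith
  have step2 : (C2 * (n:ℝ)^(ε/2)) * ((4 * (n:ℝ)^((1:ℝ)/3)) * (C3 * (n:ℝ)^(ε/2)) + 2)
      = 4*C2*C3 * ((n:ℝ)^(ε/2) * ((n:ℝ)^((1:ℝ)/3) * (n:ℝ)^(ε/2))) + 2*C2 * (n:ℝ)^(ε/2) := by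
    ring
  calc ((n / 2^(K + 1) : ℕ) : ℝ) + 1
      + ((K:ℝ)+1) * (((2:ℕ)^(K/2+1) : ℝ) * (1 + (DM n : ℝ)) + 2)
      ≤ (n:ℝ)^((1:ℝ)/3) + 1
        + (4*C2*C3 * ((n:ℝ)^(ε/2) * ((n:ℝ)^((1:ℝ)/3) * (n:ℝ)^(ε/2))) + 2*C2 * (n:ℝ)^(ε/2)) := by
        rw [← step2]
        linarith [step1]
    _ = (n:ℝ)^((1:ℝ)/3) + 1 + 4*C2*C3 * (n:ℝ)^((1:ℝ)/3+ε) + 2*C2 * (n:ℝ)^(ε/2) := by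
        rw [e5]; ring
    _ ≤ (2 + 4*C2*C3 + 2*C2) * (n:ℝ)^((1:ℝ)/3+ε) := by
        have g1 : 2*C2 * (n:ℝ)^(ε/2) ≤ 2*C2 * (n:ℝ)^((1:ℝ)/3+ε) := by
          apply mul_le_mul_of_nonneg_left e7
          positivity
        nlinarith

end StmtAux

theorem stmt_12 : ∀ ε > (0:ℝ), ∃ C > (0:ℝ), ∀ n : ℕ, 0 < n →
    (Pmax n : ℝ) ≤ C * (n : ℝ) ^ ((1:ℝ)/3 + ε) := by
  intro ε hε
  obtain ⟨C, hC, hCb⟩ := StmtAux.NB_le hε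
  refine ⟨C, hC, ?_⟩
  intro n hn
  have h1 : Pmax n ≤ StmtAux.NB n := by
    rw [Pmax]
    apply Finset.sup_le
    intro a ha
    rw [Finset.mem_Icc] at ha
    exact StmtAux.mainNat ha.1 ha.2
  calc (Pmax n : ℝ) ≤ (StmtAux.NB n : ℝ) := by exact_mod_cast h1
    _ ≤ C * (n:ℝ)^((1:ℝ)/3 + ε) := hCb n hn
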